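/- Let V be a nonempty finite type, let p : V → ℝ be a probability vector with p i > 0 for all i, and let α ∈ [0,1). The skew reverse KL objective q ↦ D_KL(q ‖ (1−α)·p + α·q) = Σ_{i ∈ V} q i · log( q i / ((1−α)·p i + α·q i) ) is convex on the interior of the probability simplex: for all full-support probability vectors q₀, q₁ and all t ∈ [0,1], its value at t·q₀ + (1−t)·q₁ is at most t times its value at q₀ plus (1−t) times its value at q₁. (This follows from the joint convexity of KL divergence and the fact that both arguments (q, (1−α)p + αq) depend affinely on q.) -/

import Mathlib

open Finset

lemma log_sum_ineq {a b c d : ℝ} (ha : 0 < a) (hb : 0 < b) (hc : 0 < c) (hd : 0 < d) :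
    (a + b) * Real.log ((a + b) / (c + d)) ≤ a * Real.log (a / c) + b * Real.log (b / d) := by
  have hcd : 0 < c + d := by linarith
  have hconv := Real.strictConvexOn_mul_log.convexOn
  have h := hconv.2 (Set.mem_Ici.mpr (le_of_lt (div_pos ha hc)))
    (Set.mem_Ici.mpr (le_of_lt (div_pos hb hd)))
    (le_of_lt (div_pos hc hcd)) (le_of_lt (div_pos hd hcd))
    (show c / (c + d) + d / (c + d) = 1 by field_simp)
  simp only [smul_eq_mul] at h
  have key : c / (c + d) * (a / c) + d / (c + d) * (b / d) = (a + b) / (c + d) := by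
    field_simp
  rw [key] at h
  have h2 := mul_le_mul_of_nonneg_left h (le_of_lt hcd)
  calc (a + b) * Real.log ((a + b) / (c + d))
      = (c + d) * ((a + b) / (c + d) * Real.log ((a + b) / (c + d))) := by
        field_simp
    _ ≤ (c + d) * (c / (c + d) * (a / c * Real.log (a / c)) + d / (c + d) * (b / d * Real.log (b / d))) := h2
    _ = a * Real.log (a / c) + b * Real.log (b / d) := by field_simp

/-- For a full-support teacher probability vector `p` and skew coefficient `α ∈ [0,1)`, the
skew reverse KL objective `q ↦ D_KL(q ‖ (1−α)·p + α·q)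
= ∑ i, q i * log (q i / ((1 - α) * p i + α * q i))` is convex on the interior of the
probability simplex: for full-support probability vectors `q₀, q₁` and `t ∈ [0,1]`, its
value at `t·q₀ + (1−t)·q₁` is at most `t` times its value at `q₀` plus `(1−t)` times its
value at `q₁`. -/
theorem srkl_convex {V : Type*} [Fintype V] [Nonempty V]
    (p : V → ℝ) (hp0 : ∀ i, 0 < p i) (hp1 : ∑ i, p i = 1)
    (α : ℝ) (hα0 : 0 ≤ α) (hα1 : α < 1) :
    ∀ q₀ q₁ : V → ℝ, (∀ i, 0 < q₀ i) → (∑ i, q₀ i = 1) →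
      (∀ i, 0 < q₁ i) → (∑ i, q₁ i = 1) → ∀ t : ℝ, 0 ≤ t → t ≤ 1 →
      (∑ i, (t * q₀ i + (1 - t) * q₁ i) *
          Real.log ((t * q₀ i + (1 - t) * q₁ i) /
            ((1 - α) * p i + α * (t * q₀ i + (1 - t) * q₁ i)))) ≤
        t * (∑ i, q₀ i * Real.log (q₀ i / ((1 - α) * p i + α * q₀ i))) +
          (1 - t) * (∑ i, q₁ i * Real.log (q₁ i / ((1 - α) * p i + α * q₁ i))) := by
  intro q₀ q₁ hq₀ hq₀1 hq₁ hq₁1 t ht0 ht1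
  rcases eq_or_lt_of_le ht0 with h0 | h0
  · simp [← h0]
  rcases eq_or_lt_of_le ht1 with h1 | h1
  · simp [h1]
  have h1' : 0 < 1 - t := by linarith
  rw [Finset.mul_sum, Finset.mul_sum, ← Finset.sum_add_distrib]
  apply Finset.sum_le_sum
  intro i _
  have hm : ∀ q : V → ℝ, (∀ j, 0 < q j) → 0 < (1 - α) * p i + α * q i := by
    intro q hq
    have := hp0 i; have := hq i
    nlinarith
  have key := log_sum_ineq (a := t * q₀ i) (b := (1 - t) * q₁ i)
    (c := t * ((1 - α) * p i + α * q₀ i)) (d := (1 - t) * ((1 - α) * p i + α * q₁ i))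
    (mul_pos h0 (hq₀ i)) (mul_pos h1' (hq₁ i))
    (mul_pos h0 (hm q₀ hq₀)) (mul_pos h1' (hm q₁ hq₁))
  have e1 : t * ((1 - α) * p i + α * q₀ i) + (1 - t) * ((1 - α) * p i + α * q₁ i)
      = (1 - α) * p i + α * (t * q₀ i + (1 - t) * q₁ i) := by ring
  have e2 : t * q₀ i / (t * ((1 - α) * p i + α * q₀ i))
      = q₀ i / ((1 - α) * p i + α * q₀ i) := by
    rw [mul_div_mul_left _ _ (ne_of_gt h0)]
  have e3 : (1 - t) * q₁ i / ((1 - t) * ((1 - α) * p i + α * q₁ i))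
      = q₁ i / ((1 - α) * p i + α * q₁ i) := by
    rw [mul_div_mul_left _ _ (ne_of_gt h1')]
  rw [e1, e2, e3] at key
  calc (t * q₀ i + (1 - t) * q₁ i) *
        Real.log ((t * q₀ i + (1 - t) * q₁ i) / ((1 - α) * p i + α * (t * q₀ i + (1 - t) * q₁ i)))
      ≤ t * q₀ i * Real.log (q₀ i / ((1 - α) * p i + α * q₀ i)) +
        (1 - t) * q₁ i * Real.log (q₁ i / ((1 - α) * p i + α * q₁ i)) := key
    _ = t * (q₀ i * Real.log (q₀ i / ((1 - α) * p i + α * q₀ i))) +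
        (1 - t) * (q₁ i * Real.log (q₁ i / ((1 - α) * p i + α * q₁ i))) := by ring
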